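/- arXiv:0906.2994 — 2 statements merged into one kernel-verified Lean document; each statement's English description precedes it below -/
import Mathlib

section
/- Let O be a discrete valuation ring with residue field F and let C be a bounded complex of finitely generated free O-modules. If for every odd integer i the cohomology H^i(F ⊗_O C) of the reduced complex vanishes, then for every integer i the O-module H^i(C) is free, and H^i(C) = 0 for all odd i. -/
open CategoryTheory CategoryTheory.Limits CategoryTheory.MonoidalCategory

private lemma homologyMap_smul_aux {R : Type*} [Semiring R] {A : Type*} [Category A] [Abelian A]
    [CategoryTheory.Linear R A] {ι : Type*} {c : ComplexShape ι}
    {K L : HomologicalComplex A c} (φ : K ⟶ L) (r : R) (i : ι) :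
    HomologicalComplex.homologyMap (r • φ) i = r • HomologicalComplex.homologyMap φ i := by
  have h : (HomologicalComplex.shortComplexFunctor A c i).map (r • φ) =
      r • (HomologicalComplex.shortComplexFunctor A c i).map φ := by
    ext <;>
      rfl
  dsimp only [HomologicalComplex.homologyMap]
  rw [h, ShortComplex.homologyMap_smul]
  rfl

/-- Let `O` be a discrete valuation ring with residue field `F` and `C` a bounded complex of
finitely generated free `O`-modules.  If the cohomology `H^i(F ⊗_O C)` of the termwise
reduction vanishes for every odd `i`, then every `H^i(C)` is a free `O`-module and
`H^i(C) = 0` for all odd `i`. -/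
theorem homology_free_and_odd_vanishing_of_reduction_odd_vanishing
    (O : Type) [CommRing O] [IsDomain O] [IsDiscreteValuationRing O]
    (C : CochainComplex (ModuleCat O) ℤ)
    (hbdd : ∃ a b : ℤ, ∀ i : ℤ, (i < a ∨ b < i) → IsZero (C.X i))
    (hfree : ∀ i : ℤ, Module.Free O (C.X i))
    (hfin : ∀ i : ℤ, Module.Finite O (C.X i))
    (hodd : ∀ i : ℤ, Odd i →
      IsZero ((((tensorLeft (ModuleCat.of O (IsLocalRing.ResidueField O))).mapHomologicalComplex
        (ComplexShape.up ℤ)).obj C).homology i)) :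
    (∀ i : ℤ, Module.Free O (C.homology i)) ∧ ∀ i : ℤ, Odd i → IsZero (C.homology i) := by
  classical
  obtain ⟨ϖ, hϖ⟩ := IsDiscreteValuationRing.exists_irreducible O
  set Fm : ModuleCat O := ModuleCat.of O (IsLocalRing.ResidueField O) with hFm
  set T : CochainComplex (ModuleCat O) ℤ :=
    ((tensorLeft Fm).mapHomologicalComplex (ComplexShape.up ℤ)).obj C with hTdef
  -- the reduction chain map `q : C ⟶ T`
  let q : C ⟶ T :=
    { f := fun i =>
        ModuleCat.ofHom (TensorProduct.mk O (IsLocalRing.ResidueField O) (C.X i) 1 : C.X i →ₗ[O] _)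
      comm' := by
        intro i j hij
        ext x
        show ((tensorLeft Fm).map (C.d i j)) ((1 : IsLocalRing.ResidueField O) ⊗ₜ x) =
          (1 : IsLocalRing.ResidueField O) ⊗ₜ (C.d i j x)
        simp [tensorLeft] }
  have hϖ1 : (ϖ • (1 : IsLocalRing.ResidueField O)) = 0 := by
    have : (ϖ • (1 : IsLocalRing.ResidueField O)) = IsLocalRing.residue O ϖ := by
      rw [← Algebra.algebraMap_eq_smul_one]; rfl
    rw [this, IsLocalRing.residue_eq_zero_iff, hϖ.maximalIdeal_eq]
    exact Ideal.mem_span_singleton_self ϖ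
  -- the short exact sequence of complexes `0 ⟶ C ⟶ C ⟶ T ⟶ 0`
  let S : ShortComplex (HomologicalComplex (ModuleCat O) (ComplexShape.up ℤ)) :=
    ShortComplex.mk (ϖ • 𝟙 C) q (by
      ext i x
      show q.f i ((ϖ • 𝟙 C).f i x) = 0
      have : (ϖ • 𝟙 C).f i x = ϖ • x := rfl
      rw [this]
      show (1 : IsLocalRing.ResidueField O) ⊗ₜ[O] (ϖ • x) = 0
      rw [TensorProduct.tmul_smul, TensorProduct.smul_tmul', hϖ1,
        TensorProduct.zero_tmul])
  have hS : S.ShortExact := by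
    apply HomologicalComplex.shortExact_of_degreewise_shortExact
    intro i
    haveI := hfree i
    refine { exact := ?_, mono_f := ?_, epi_g := ?_ }
    · rw [ShortComplex.moduleCat_exact_iff]
      intro (x : C.X i) hx
      have hx' : (1 : IsLocalRing.ResidueField O) ⊗ₜ[O] x = 0 := hx
      have h0 : Submodule.Quotient.mk (p := (IsLocalRing.maximalIdeal O •
          (⊤ : Submodule O (C.X i)))) x = 0 := by
        have := congrArg (TensorProduct.quotTensorEquivQuotSMul (C.X i)
          (IsLocalRing.maximalIdeal O)) hx'
        erw [map_zero] at this
        rw [← this]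
        have h1 : (1 : IsLocalRing.ResidueField O) =
            Ideal.Quotient.mk (IsLocalRing.maximalIdeal O) 1 := rfl
        erw [TensorProduct.quotTensorEquivQuotSMul_mk_tmul (IsLocalRing.maximalIdeal O) 1 x, one_smul]
      rw [Submodule.Quotient.mk_eq_zero] at h0
      have : ∃ y, ϖ • y = x := by
        refine Submodule.smul_induction_on h0 ?_ ?_
        · intro r hr n _
          rw [hϖ.maximalIdeal_eq, Ideal.mem_span_singleton] at hr
          obtain ⟨c, rfl⟩ := hr
          exact ⟨c • n, by rw [smul_smul, mul_comm]⟩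
        · rintro a b ⟨y, rfl⟩ ⟨z, rfl⟩
          exact ⟨y + z, by rw [smul_add]⟩
      obtain ⟨y, hy⟩ := this
      exact ⟨y, hy⟩
    · rw [ModuleCat.mono_iff_injective]
      intro x y h
      have h' : ϖ • x = ϖ • y := h
      exact smul_right_injective (C.X i) hϖ.ne_zero h'
    · rw [ModuleCat.epi_iff_surjective]
      intro z
      induction z using TensorProduct.induction_on with
      | zero => exact ⟨0, map_zero _⟩
      | tmul a x =>
        obtain ⟨b, rfl⟩ := IsLocalRing.residue_surjective (R := O) a
        refine ⟨b • x, ?_⟩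
        show (1 : IsLocalRing.ResidueField O) ⊗ₜ[O] (b • x) = _
        rw [TensorProduct.tmul_smul, TensorProduct.smul_tmul']
        congr 1
        rw [← Algebra.algebraMap_eq_smul_one]; rfl
      | add u v hu hv =>
        obtain ⟨y, hy⟩ := hu
        obtain ⟨z, hz⟩ := hv
        exact ⟨y + z, by rw [map_add, hy, hz]; rfl⟩
  -- the action of `ϖ` on homology
  have hMπ : ∀ i : ℤ, HomologicalComplex.homologyMap (ϖ • 𝟙 C) i =
      ϖ • 𝟙 (C.homology i) := by
    intro i
    rw [homologyMap_smul_aux, HomologicalComplex.homologyMap_id]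
  have happ : ∀ (i : ℤ) (y : C.homology i),
      (HomologicalComplex.homologyMap S.f i) y = ϖ • y := by
    intro i y
    rw [show S.f = ϖ • 𝟙 C from rfl, hMπ i]
    rfl
  -- surjectivity of multiplication by ϖ on odd homology
  have hsurj : ∀ i : ℤ, Odd i → ∀ x : C.homology i, ∃ y : C.homology i, ϖ • y = x := by
    intro i hi x
    have hex := hS.homology_exact₂ i
    rw [ShortComplex.moduleCat_exact_iff] at hex
    have h3 : HomologicalComplex.homologyMap S.g i = 0 := (hodd i hi).eq_of_tgt _ _
    obtain ⟨y, hy⟩ := hex x (show (HomologicalComplex.homologyMap S.g i) x = 0 by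
      rw [h3]; rfl)
    have hy' : (HomologicalComplex.homologyMap S.f i) y = x := hy
    exact ⟨y, (happ i y).symm.trans hy'⟩
  -- injectivity of multiplication by ϖ on homology in degrees with odd predecessor
  have hinj : ∀ i : ℤ, Odd (i - 1) → ∀ x : C.homology i, ϖ • x = 0 → x = 0 := by
    intro i hi x hx
    have hrel : (ComplexShape.up ℤ).Rel (i - 1) i := by simp
    have hex := hS.homology_exact₁ (i - 1) i hrel
    rw [ShortComplex.moduleCat_exact_iff] at hex
    obtain ⟨y, hy⟩ := hex x (show (HomologicalComplex.homologyMap S.f i) x = 0 by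
      rw [happ i x]; exact hx)
    have hy' : hS.δ (i - 1) i hrel y = x := hy
    have hδ : hS.δ (i - 1) i hrel = 0 := (hodd (i - 1) hi).eq_of_src _ _
    rw [hδ] at hy'
    rw [← hy']
    rfl
  -- finiteness of homology
  have instFin : ∀ i : ℤ, Module.Finite O (C.homology i) := by
    intro i
    haveI := hfin i
    haveI : IsNoetherian O (C.X i) := isNoetherian_of_isNoetherianRing_of_finite O (C.X i)
    haveI : IsNoetherian O (C.cycles i) :=
      isNoetherian_of_injective (C.iCycles i).hom
        ((ModuleCat.mono_iff_injective _).mp inferInstance)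
    exact Module.Finite.of_surjective ((C.homologyπ i).hom : C.cycles i →ₗ[O] C.homology i)
      ((ModuleCat.epi_iff_surjective _).mp inferInstance)
  -- vanishing of odd homology (Nakayama)
  have hzero : ∀ i : ℤ, Odd i → Subsingleton (C.homology i) := by
    intro i hi
    haveI := instFin i
    have h1 : (⊤ : Submodule O (C.homology i)) ≤
        (IsLocalRing.maximalIdeal O) • (⊤ : Submodule O (C.homology i)) := by
      intro x _
      obtain ⟨y, rfl⟩ := hsurj i hi x
      exact Submodule.smul_mem_smul
        (by rw [IsLocalRing.mem_maximalIdeal]; exact hϖ.not_isUnit) Submodule.mem_top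
    have h2 := Submodule.eq_bot_of_le_smul_of_le_jacobson_bot (IsLocalRing.maximalIdeal O)
      ⊤ (Module.finite_def.mp inferInstance) h1
      (le_of_eq (IsLocalRing.jacobson_eq_maximalIdeal ⊥ bot_ne_top).symm)
    refine ⟨fun a b => ?_⟩
    have ha : a ∈ (⊥ : Submodule O (C.homology i)) := h2 ▸ Submodule.mem_top
    have hb : b ∈ (⊥ : Submodule O (C.homology i)) := h2 ▸ Submodule.mem_top
    rw [Submodule.mem_bot] at ha hb
    rw [ha, hb]
  -- no torsion in homology in degrees with odd predecessor
  have hnz : ∀ i : ℤ, Odd (i - 1) → NoZeroSMulDivisors O (C.homology i) := by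
    intro i hi
    refine ⟨fun {a x} hax => ?_⟩
    by_cases ha : a = 0
    · exact Or.inl ha
    right
    obtain ⟨n, u, rfl⟩ := IsDiscreteValuationRing.eq_unit_mul_pow_irreducible ha hϖ
    have hn : ϖ ^ n • x = 0 := by
      have := congrArg (fun z : C.homology i => ((u⁻¹ : Oˣ) : O) • z) hax
      simp only [smul_smul, ← mul_assoc, Units.inv_mul, one_mul, smul_zero] at this
      exact this
    clear hax ha
    induction n with
    | zero => simpa using hn
    | succ n ih =>
      apply ih
      apply hinj i hi
      rw [smul_smul, ← pow_succ']
      exact hn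
  constructor
  · intro i
    rcases Int.even_or_odd i with he | ho
    · haveI := instFin i
      haveI : NoZeroSMulDivisors O (C.homology i) := by
        apply hnz
        obtain ⟨k, rfl⟩ := he
        exact ⟨k - 1, by ring⟩
      haveI : Module.IsTorsionFree O (C.homology i) := instIsTorsionFreeOfIsDomainOfNoZeroSMulDivisors
      exact Module.free_of_finite_type_torsion_free'
    · haveI := hzero i ho
      infer_instance
  · intro i hi
    haveI := hzero i hi
    exact ModuleCat.isZero_of_subsingleton _
end

section
/- Let k be a field and C a k-linear Krull–Schmidt additive category. Let a, b be objects with End(a) ≅ k, and write b ≅ a^{⊕m} ⊕ c where a is not a direct summand of c. Then m equals the rank of the composition pairing B : Hom(a,b) × Hom(b,a) → End(a) = k. Moreover Hom(a,c) = ⊥B inside Hom(a,b) and Hom(c,a) = B⊥ inside Hom(b,a). -/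
open CategoryTheory CategoryTheory.Limits

/-- Let `C` be a `k`-linear Krull–Schmidt additive category (`k` a field), `a`, `c` objects
with `End(a) ≅ k` (via `t ↦ t • 𝟙 a`), and `b ≅ a^{⊕m} ⊕ c` where `a` is not a direct
summand of `c`.  Then `m` equals the rank of the composition pairing
`B : Hom(a,b) × Hom(b,a) → End(a) = k`, i.e. the rank of the induced map
`Hom(a,b) → Hom(b,a)^*`; moreover `Hom(a,c) = ⊥B` inside `Hom(a,b)` and
`Hom(c,a) = B⊥` inside `Hom(b,a)` (via the given decomposition of `b`). -/
theorem multiplicity_eq_rank_of_composition_pairing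
    {k : Type} [Field k] {C : Type} [Category C] [Preadditive C]
    [CategoryTheory.Linear k C] [HasFiniteBiproducts C] [HasBinaryBiproducts C]
    (a c b : C) (m : ℕ)
    (e : b ≅ (⨁ fun _ : Fin m => a) ⊞ c)
    (hEnd : Function.Bijective (LinearMap.toSpanSingleton k (a ⟶ a) (𝟙 a)))
    (hnot : ¬ ∃ (f : a ⟶ c) (g : c ⟶ a), f ≫ g = 𝟙 a) :
    let ψ : k ≃ₗ[k] (a ⟶ a) := LinearEquiv.ofBijective _ hEnd
    let Bpair : (a ⟶ b) →ₗ[k] (b ⟶ a) →ₗ[k] k :=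
      LinearMap.mk₂ k (fun f g => ψ.symm (f ≫ g))
        (by intros; simp [Preadditive.add_comp])
        (by intros; simp [CategoryTheory.Linear.smul_comp])
        (by intros; simp [Preadditive.comp_add])
        (by intros; simp [CategoryTheory.Linear.comp_smul])
    m = Module.finrank k ↥(LinearMap.range Bpair) ∧
    (∀ f : a ⟶ b, f ∈ LinearMap.ker Bpair ↔
      ∃ h : a ⟶ c, f = h ≫ biprod.inr ≫ e.inv) ∧
    (∀ g : b ⟶ a, (∀ f : a ⟶ b, Bpair f g = 0) ↔
      ∃ h : c ⟶ a, g = e.hom ≫ biprod.snd ≫ h) := by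
  intro ψ Bpair
  have hψ : ∀ t : k, ψ t = t • 𝟙 a := fun t => rfl
  have hψs : ∀ t : k, ψ.symm (t • 𝟙 a) = t := fun t => by
    rw [← hψ]; exact ψ.symm_apply_apply t
  have hψ0 : ψ.symm (0 : a ⟶ a) = 0 := map_zero _
  have hB : ∀ (f : a ⟶ b) (g : b ⟶ a), Bpair f g = ψ.symm (f ≫ g) := fun _ _ => rfl
  -- every composite through c is zero
  have hzero : ∀ (p : a ⟶ c) (q : c ⟶ a), p ≫ q = 0 := by
    intro p q
    have h1 : p ≫ q = ψ (ψ.symm (p ≫ q)) := (ψ.apply_symm_apply _).symm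
    by_cases ht : ψ.symm (p ≫ q) = 0
    · rw [h1, ht, map_zero]
    · exfalso
      apply hnot
      set t := ψ.symm (p ≫ q) with htd
      have h2 : p ≫ q = t • 𝟙 a := h1.trans (hψ _)
      refine ⟨t⁻¹ • p, q, ?_⟩
      rw [CategoryTheory.Linear.smul_comp, h2, smul_smul, inv_mul_cancel₀ ht,
        one_smul]
  set F : Fin m → (a ⟶ b) := fun i =>
    biproduct.ι (fun _ : Fin m => a) i ≫ biprod.inl ≫ e.inv with hF
  set G : Fin m → (b ⟶ a) := fun j =>
    e.hom ≫ biprod.fst ≫ biproduct.π (fun _ : Fin m => a) j with hG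
  have hFG : ∀ i j, F i ≫ G j = if i = j then 𝟙 a else 0 := by
    intro i j
    by_cases hij : i = j
    · subst hij; simp [hF, hG]
    · simp [hF, hG, biproduct.ι_π_ne _ hij, hij]
  have hBFG : ∀ i j, Bpair (F i) (G j) = if i = j then 1 else 0 := by
    intro i j
    rw [hB, hFG]
    by_cases hij : i = j
    · simp only [hij, if_pos rfl]
      simpa using hψs 1
    · simp [hij, hψ0]
  -- factorization lemmas
  have hfacL : ∀ f : a ⟶ b, (∀ j, f ≫ G j = 0) →
      f = (f ≫ e.hom ≫ biprod.snd) ≫ biprod.inr ≫ e.inv := by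
    intro f hj
    have hfst : f ≫ e.hom ≫ biprod.fst = 0 := by
      apply biproduct.hom_ext
      intro j
      simpa [hG] using hj j
    have h2 : f ≫ e.hom = (f ≫ e.hom ≫ biprod.snd) ≫ biprod.inr := by
      apply biprod.hom_ext
      · simpa using hfst
      · simp
    calc f = (f ≫ e.hom) ≫ e.inv := by simp
    _ = ((f ≫ e.hom ≫ biprod.snd) ≫ biprod.inr) ≫ e.inv := by rw [h2]
    _ = (f ≫ e.hom ≫ biprod.snd) ≫ biprod.inr ≫ e.inv := by simp
  have hfacR : ∀ g : b ⟶ a, (∀ i, F i ≫ g = 0) →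
      g = e.hom ≫ biprod.snd ≫ (biprod.inr ≫ e.inv ≫ g) := by
    intro g hi
    have hinl : biprod.inl ≫ (e.inv ≫ g) = 0 := by
      apply biproduct.hom_ext'
      intro i
      simpa [hF] using hi i
    have h2 : e.inv ≫ g = biprod.snd ≫ (biprod.inr ≫ e.inv ≫ g) := by
      apply biprod.hom_ext'
      · simpa using hinl
      · simp
    calc g = e.hom ≫ (e.inv ≫ g) := by simp
    _ = e.hom ≫ biprod.snd ≫ (biprod.inr ≫ e.inv ≫ g) := by conv_lhs => rw [h2]
  -- the left-kernel inclusion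
  have hkerfac : ∀ (h : a ⟶ c) (g : b ⟶ a),
      Bpair (h ≫ biprod.inr ≫ e.inv) g = 0 := by
    intro h g
    rw [hB]
    have : (h ≫ biprod.inr ≫ e.inv) ≫ g = h ≫ (biprod.inr ≫ e.inv ≫ g) := by simp
    rw [this, hzero, hψ0]
  -- characterization of the kernel
  have hker : ∀ f : a ⟶ b, f ∈ LinearMap.ker Bpair ↔
      ∃ h : a ⟶ c, f = h ≫ biprod.inr ≫ e.inv := by
    intro f
    constructor
    · intro hf
      have hz : ∀ g : b ⟶ a, f ≫ g = 0 := by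
        intro g
        have : Bpair f g = 0 := by rw [LinearMap.mem_ker.mp hf]; rfl
        have := hB f g ▸ this
        exact ψ.symm.injective (by rw [this, hψ0])
      exact ⟨f ≫ e.hom ≫ biprod.snd, hfacL f (fun j => hz (G j))⟩
    · rintro ⟨h, rfl⟩
      exact LinearMap.mem_ker.mpr (LinearMap.ext fun g => hkerfac h g)
  refine ⟨?_, hker, ?_⟩
  · -- rank statement
    set v : Fin m → ((b ⟶ a) →ₗ[k] k) := fun i => Bpair (F i) with hv
    have hli : LinearIndependent k v := by
      rw [Fintype.linearIndependent_iff]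
      intro t ht i
      have := congrArg (fun φ => φ (G i)) ht
      simpa [hv, hBFG, Finset.sum_ite_eq' Finset.univ i] using this
    have hspan : LinearMap.range Bpair = Submodule.span k (Set.range v) := by
      apply le_antisymm
      · rintro _ ⟨f, rfl⟩
        set x : Fin m → k := fun i => Bpair f (G i) with hx
        have hdiff : Bpair (f - ∑ i, x i • F i) = 0 := by
          have hz : ∀ j, (f - ∑ i, x i • F i) ≫ G j = 0 := by
            intro j
            have h1 : f ≫ G j = x j • 𝟙 a := by
              have := (ψ.apply_symm_apply (f ≫ G j)).symm
              rw [hψ] at this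
              exact this
            rw [Preadditive.sub_comp, Preadditive.sum_comp, h1]
            have : ∀ i, (x i • F i) ≫ G j = x i • (F i ≫ G j) := fun i => by
              rw [CategoryTheory.Linear.smul_comp]
            simp only [this, hFG, smul_ite, smul_zero]
            rw [Finset.sum_ite_eq' Finset.univ j]
            simp
          exact LinearMap.mem_ker.mp ((hker _).mpr ⟨_, hfacL _ hz⟩)
        have heq : Bpair f = ∑ i, x i • v i := by
          have h0 := hdiff
          rw [map_sub, map_sum, sub_eq_zero] at h0
          simpa [hv, map_smul] using h0
        rw [heq]
        exact Submodule.sum_mem _ fun i _ =>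
          Submodule.smul_mem _ _ (Submodule.subset_span ⟨i, rfl⟩)
      · rw [Submodule.span_le]
        rintro _ ⟨i, rfl⟩
        exact ⟨F i, rfl⟩
    rw [hspan, finrank_span_eq_card hli, Fintype.card_fin]
  · -- right kernel
    intro g
    constructor
    · intro hg
      refine ⟨biprod.inr ≫ e.inv ≫ g, hfacR g fun i => ?_⟩
      have := hg (F i)
      rw [hB] at this
      exact ψ.symm.injective (by rw [this, hψ0])
    · rintro ⟨h, rfl⟩
      intro f
      rw [hB]
      have : f ≫ e.hom ≫ biprod.snd ≫ h = (f ≫ e.hom ≫ biprod.snd) ≫ h := by simp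
      rw [this, hzero, hψ0]
end
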